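/- Let ρ = Σ_{n≥0} γ_n |ψ_n⟩⟨ψ_n| be a density operator with eigenvalues γ_n, fix a cutoff n̄, and set ε = Σ_{n≥n̄} γ_n. Write S_head = −Σ_{n<n̄} γ_n log₂ γ_n. If the mean energy of the discarded tail is ΔE = Σ_{n≥n̄} n γ_n (in an eigenbasis where |ψ_n⟩ has energy n), then the von Neumann entropy satisfies 0 ≤ S(ρ) − (S_head − ε log₂ ε) ≤ ε · g(ΔE/ε), where g(x) = (x+1)log₂(x+1) − x log₂ x. -/

import Mathlib

set_option maxHeartbeats 1000000


open scoped BigOperators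

/-- The bosonic (thermal) entropy function `g(x) = (x+1)log₂(x+1) − x log₂ x`. -/
noncomputable def bosonicEntropy (x : ℝ) : ℝ :=
  (x + 1) * Real.logb 2 (x + 1) - x * Real.logb 2 x

/-- Shifting a tail `tsum`. -/
lemma tsum_ite_shift (h : ℕ → ℝ) (k : ℕ) :
    (∑' n : ℕ, if k ≤ n then h n else 0) = ∑' n : ℕ, h (n + k) := by
  have hinj : Function.Injective (fun n : ℕ => n + k) := fun a b hab => by
    simpa using hab
  have hsupp : Function.support (fun n : ℕ => if k ≤ n then h n else 0) ⊆
      Set.range (fun n : ℕ => n + k) := by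
    intro n hn
    have hk : k ≤ n := by
      by_contra hk
      simp [Function.support, hk] at hn
    exact ⟨n - k, by simp only []; omega⟩
  have := hinj.tsum_eq (f := fun n : ℕ => if k ≤ n then h n else 0) hsupp
  simp only [Nat.le_add_left, if_true] at this
  exact this.symm

/-- Truncation error bound for the von Neumann entropy: discarding a tail of total weight
`ε` and mean energy `ΔE` changes the entropy by at most `ε·g(ΔE/ε)` beyond `−ε log₂ ε`. -/
theorem truncation_error_bound (γ : ℕ → ℝ) (hnn : ∀ n, 0 ≤ γ n)
    (hsum : ∑' n : ℕ, γ n = 1)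
    (hE : Summable fun n : ℕ => (n : ℝ) * γ n)
    (hent : Summable fun n => γ n * Real.logb 2 (γ n))
    (nbar : ℕ) :
    let ε : ℝ := ∑' n : ℕ, if nbar ≤ n then γ n else 0
    let Shead : ℝ := -∑ n ∈ Finset.range nbar, γ n * Real.logb 2 (γ n)
    let ΔE : ℝ := ∑' n : ℕ, if nbar ≤ n then (n : ℝ) * γ n else 0
    let S : ℝ := -∑' n : ℕ, γ n * Real.logb 2 (γ n)
    0 ≤ S - (Shead - ε * Real.logb 2 ε) ∧
    S - (Shead - ε * Real.logb 2 ε) ≤ ε * bosonicEntropy (ΔE / ε) := by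
  intro ε Shead ΔE S
  have hγ : Summable γ := by
    by_contra h
    rw [tsum_eq_zero_of_not_summable h] at hsum
    norm_num at hsum
  set δ : ℕ → ℝ := fun n => γ (n + nbar) with hδdef
  have hδnn : ∀ n, 0 ≤ δ n := fun n => hnn _
  have hδs : Summable δ := (summable_nat_add_iff nbar).2 hγ
  have hfs : Summable (fun n => δ n * Real.logb 2 (δ n)) := (summable_nat_add_iff nbar).2 hent
  have hEs' : Summable (fun n => ((n + nbar : ℕ) : ℝ) * δ n) := (summable_nat_add_iff nbar).2 hE
  have hε : ε = ∑' n, δ n := tsum_ite_shift γ nbar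
  have hΔE : ΔE = ∑' n, ((n + nbar : ℕ) : ℝ) * δ n :=
    tsum_ite_shift (fun n => (n : ℝ) * γ n) nbar
  set T := ∑' n, δ n * Real.logb 2 (δ n) with hTdef
  have hS : S = Shead - T := by
    have h := Summable.sum_add_tsum_nat_add (f := fun n => γ n * Real.logb 2 (γ n)) nbar hent
    have hS0 : S = -∑' n : ℕ, γ n * Real.logb 2 (γ n) := rfl
    have hSh : Shead = -∑ n ∈ Finset.range nbar, γ n * Real.logb 2 (γ n) := rfl
    have hTr : T = ∑' i : ℕ, γ (i + nbar) * Real.logb 2 (γ (i + nbar)) := rfl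
    rw [hS0, hSh, ← h, hTr]
    ring
  have key : S - (Shead - ε * Real.logb 2 ε) = ε * Real.logb 2 ε - T := by
    rw [hS]; ring
  rw [key]
  have hεnn : 0 ≤ ε := hε ▸ tsum_nonneg hδnn
  have hδle : ∀ n, δ n ≤ ε := fun n => hε ▸ Summable.le_tsum hδs n (fun j _ => hδnn j)
  -- Part 1 : T ≤ ε * logb 2 ε
  have part1 : T ≤ ε * Real.logb 2 ε := by
    have h1 : ∀ n, δ n * Real.logb 2 (δ n) ≤ δ n * Real.logb 2 ε := by
      intro n
      rcases eq_or_lt_of_le (hδnn n) with h | h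
      · rw [← h]; simp
      · have hεpos : 0 < ε := lt_of_lt_of_le h (hδle n)
        exact mul_le_mul_of_nonneg_left
          ((Real.logb_le_logb one_lt_two h hεpos).2 (hδle n)) h.le
    calc T ≤ ∑' n, δ n * Real.logb 2 ε := Summable.tsum_le_tsum h1 hfs (hδs.mul_right _)
      _ = ε * Real.logb 2 ε := by rw [tsum_mul_right, ← hε]
  refine ⟨by linarith, ?_⟩
  rcases eq_or_lt_of_le hεnn with hε0 | hεpos
  · -- ε = 0
    have hδ0 : ∀ n, δ n = 0 := fun n => le_antisymm (hε0 ▸ hδle n) (hδnn n)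
    have hT0 : T = 0 := by
      rw [hTdef]
      have : ∀ n, δ n * Real.logb 2 (δ n) = 0 := fun n => by rw [hδ0 n]; ring
      simp only [this, tsum_zero]
    rw [← hε0, hT0]
    simp
  · have hEnn : 0 ≤ ΔE :=
      hΔE ▸ tsum_nonneg (fun n => mul_nonneg (Nat.cast_nonneg _) (hδnn n))
    rcases eq_or_lt_of_le hEnn with hE0 | hEpos
    · -- ΔE = 0
      have hg0 : bosonicEntropy (ΔE / ε) = 0 := by
        rw [← hE0]
        simp [bosonicEntropy]
      rw [hg0, mul_zero]
      have hterm : ∀ n, ((n + nbar : ℕ) : ℝ) * δ n = 0 := by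
        intro n
        have h1 : ((n + nbar : ℕ) : ℝ) * δ n ≤ ΔE := by
          rw [hΔE]
          exact Summable.le_tsum hEs' n (fun j _ => mul_nonneg (Nat.cast_nonneg _) (hδnn j))
        have h2 : 0 ≤ ((n + nbar : ℕ) : ℝ) * δ n :=
          mul_nonneg (Nat.cast_nonneg _) (hδnn n)
        rw [← hE0] at h1
        linarith
      have hδ1 : ∀ n, n + nbar ≠ 0 → δ n = 0 := by
        intro n hn
        have h := hterm n
        have hc : ((n + nbar : ℕ) : ℝ) ≠ 0 := Nat.cast_ne_zero.2 hn
        exact (mul_eq_zero.1 h).resolve_left hc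
      by_cases hnb : nbar = 0
      · subst hnb
        have hεδ : ε = δ 0 := by
          rw [hε]
          exact tsum_eq_single 0 (fun n hn => hδ1 n (by simpa using hn))
        have hTδ : T = δ 0 * Real.logb 2 (δ 0) := by
          rw [hTdef]
          exact tsum_eq_single 0 (fun n hn => by rw [hδ1 n (by simpa using hn)]; ring)
        rw [hεδ, hTδ]
        simp
      · exfalso
        have hall : ∀ n, δ n = 0 := fun n => hδ1 n (by omega)
        have : ε = 0 := by
          rw [hε]
          simp only [hall, tsum_zero]
        linarith
    · -- main case : 0 < ε, 0 < ΔE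
      set μ := ΔE / ε with hμdef
      have hμpos : 0 < μ := div_pos hEpos hεpos
      have hμ1 : 0 < μ + 1 := by linarith
      set r := μ / (μ + 1) with hrdef
      have hr0 : 0 < r := div_pos hμpos hμ1
      have hr1 : r < 1 := (div_lt_one hμ1).2 (by linarith)
      set q : ℕ → ℝ := fun n => ε / (μ + 1) * r ^ (n + nbar) with hqdef
      have hqpos : ∀ n, 0 < q n := fun n => mul_pos (div_pos hεpos hμ1) (pow_pos hr0 _)
      have hgeo : Summable (fun n : ℕ => r ^ n) := summable_geometric_of_lt_one hr0.le hr1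
      have hqs : Summable q := by
        have h : Summable (fun n : ℕ => (ε / (μ + 1) * r ^ nbar) * r ^ n) := hgeo.mul_left _
        apply h.congr
        intro n
        simp only [hqdef, pow_add]
        ring
      have hqsum_le : (∑' n, q n) ≤ ε := by
        have h1 : (∑' n : ℕ, r ^ (n + nbar)) ≤ ∑' n : ℕ, r ^ n := by
          have h := Summable.sum_add_tsum_nat_add (f := fun n : ℕ => r ^ n) nbar hgeo
          have hnn' : 0 ≤ ∑ i ∈ Finset.range nbar, r ^ i :=
            Finset.sum_nonneg fun i _ => (pow_pos hr0 i).le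
          linarith
        have h2 : (∑' n : ℕ, r ^ n) = μ + 1 := by
          rw [tsum_geometric_of_lt_one hr0.le hr1, hrdef]
          field_simp
          ring
        calc (∑' n, q n) = ε / (μ + 1) * ∑' n : ℕ, r ^ (n + nbar) := by
              rw [hqdef, tsum_mul_left]
          _ ≤ ε / (μ + 1) * (μ + 1) := by
              apply mul_le_mul_of_nonneg_left (h2 ▸ h1) (by positivity)
          _ = ε := by field_simp
      have hl2 : (0:ℝ) < Real.log 2 := Real.log_pos one_lt_two
      have hgibbs : ∀ n, δ n * Real.logb 2 (q n) - δ n * Real.logb 2 (δ n) ≤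
          (q n - δ n) / Real.log 2 := by
        intro n
        rcases eq_or_lt_of_le (hδnn n) with h | h
        · rw [← h]
          simp only [zero_mul, sub_zero, sub_self]
          positivity
        · have heq : δ n * Real.logb 2 (q n) - δ n * Real.logb 2 (δ n) =
              δ n * Real.log (q n / δ n) / Real.log 2 := by
            rw [Real.logb, Real.logb, Real.log_div (hqpos n).ne' h.ne']
            ring
          rw [heq]
          have hlog := Real.log_le_sub_one_of_pos (div_pos (hqpos n) h)
          have hnum : δ n * Real.log (q n / δ n) ≤ q n - δ n := by
            have hm := mul_le_mul_of_nonneg_left hlog h.le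
            have heq2 : δ n * (q n / δ n - 1) = q n - δ n := by field_simp
            linarith [heq2 ▸ hm]
          exact div_le_div_of_nonneg_right hnum hl2.le
      have hlogq : ∀ n, Real.logb 2 (q n) =
          (Real.logb 2 ε - Real.logb 2 (μ + 1)) + ((n + nbar : ℕ) : ℝ) * Real.logb 2 r := by
        intro n
        rw [hqdef]
        rw [Real.logb_mul (by positivity) (by positivity),
          Real.logb_div hεpos.ne' hμ1.ne', Real.logb_pow]
      have hqls : Summable (fun n => δ n * Real.logb 2 (q n)) := by
        have h : Summable (fun n => (Real.logb 2 ε - Real.logb 2 (μ + 1)) * δ n +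
            Real.logb 2 r * (((n + nbar : ℕ) : ℝ) * δ n)) :=
          (hδs.mul_left _).add (hEs'.mul_left _)
        apply h.congr
        intro n
        rw [hlogq n]
        ring
      have hqlsum : (∑' n, δ n * Real.logb 2 (q n)) =
          (Real.logb 2 ε - Real.logb 2 (μ + 1)) * ε + Real.logb 2 r * ΔE := by
        have hcong : (fun n => δ n * Real.logb 2 (q n)) =
            (fun n => (Real.logb 2 ε - Real.logb 2 (μ + 1)) * δ n +
              Real.logb 2 r * (((n + nbar : ℕ) : ℝ) * δ n)) := by
          funext n
          rw [hlogq n]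
          ring
        rw [hcong, Summable.tsum_add (hδs.mul_left _) (hEs'.mul_left _), tsum_mul_left,
          tsum_mul_left, ← hε, ← hΔE]
      have hsum_gibbs : (∑' n, δ n * Real.logb 2 (q n)) - T ≤ 0 := by
        have h1 : (∑' n, (δ n * Real.logb 2 (q n) - δ n * Real.logb 2 (δ n))) ≤
            ∑' n, (q n - δ n) / Real.log 2 :=
          Summable.tsum_le_tsum hgibbs (hqls.sub hfs) ((hqs.sub hδs).div_const _)
        have hL : (∑' n, (δ n * Real.logb 2 (q n) - δ n * Real.logb 2 (δ n))) =
            (∑' n, δ n * Real.logb 2 (q n)) - T := Summable.tsum_sub hqls hfs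
        have hR : (∑' n, (q n - δ n) / Real.log 2) = ((∑' n, q n) - ε) / Real.log 2 := by
          rw [tsum_div_const, Summable.tsum_sub hqs hδs, ← hε]
        have hR0 : ((∑' n, q n) - ε) / Real.log 2 ≤ 0 :=
          div_nonpos_of_nonpos_of_nonneg (by linarith) hl2.le
        rw [hL, hR] at h1
        linarith
      have hlogr : Real.logb 2 r = Real.logb 2 μ - Real.logb 2 (μ + 1) :=
        Real.logb_div hμpos.ne' hμ1.ne'
      have hEμ : ΔE = μ * ε := by
        rw [hμdef]; field_simp
      have hTlb : (Real.logb 2 ε - Real.logb 2 (μ + 1)) * ε +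
          (Real.logb 2 μ - Real.logb 2 (μ + 1)) * (μ * ε) ≤ T := by
        rw [← hlogr, ← hEμ]
        linarith [hqlsum ▸ hsum_gibbs]
      show ε * Real.logb 2 ε - T ≤ ε * bosonicEntropy μ
      unfold bosonicEntropy
      nlinarith [hTlb]
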